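/- For all n ≥ 0, the number of permutations of [n] avoiding the generalized pattern 1-23 equals the n-th Bell number. -/

import Mathlib

open Finset

/-- The Bell numbers: `bell n` is the number of set partitions of `[n]`. -/
def bell : ℕ → ℕ
  | 0 => 1
  | n + 1 => ∑ k ∈ (Finset.range (n + 1)).attach, Nat.choose n k * bell k
decreasing_by
  have := Finset.mem_range.mp k.2; omega

/-- `π` contains an occurrence of the generalized pattern `1-23`:
indices `i < j` with `j + 1 ≤ n` and `π i < π j < π (j+1)`. -/
def Occ123 {n : ℕ} (π : Equiv.Perm (Fin n)) : Prop :=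
  ∃ i j : Fin n, ∃ hj : (j : ℕ) + 1 < n,
    i < j ∧ π i < π j ∧ π j < π ⟨(j : ℕ) + 1, hj⟩

/-! ### Auxiliary development -/

/-- Occurrence of 1-23 in a word. -/
def OccW {m N : ℕ} (w : Fin m → Fin N) : Prop :=
  ∃ i j : Fin m, ∃ hj : (j : ℕ) + 1 < m,
    i < j ∧ w i < w j ∧ w j < w ⟨(j : ℕ) + 1, hj⟩

lemma occ123_iff_occW {n : ℕ} (π : Equiv.Perm (Fin n)) : Occ123 π ↔ OccW (π : Fin n → Fin n) :=
  Iff.rfl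

lemma occW_comp_strictMono {m N N' : ℕ} {f : Fin N → Fin N'} (hf : StrictMono f)
    (w : Fin m → Fin N) : OccW (f ∘ w) ↔ OccW w := by
  constructor
  · rintro ⟨i, j, hj, h1, h2, h3⟩
    exact ⟨i, j, hj, h1, hf.lt_iff_lt.mp h2, hf.lt_iff_lt.mp h3⟩
  · rintro ⟨i, j, hj, h1, h2, h3⟩
    exact ⟨i, j, hj, h1, hf h2, hf h3⟩

/-- The number of 1-23-avoiding permutations of `[n]`. -/
noncomputable def A (n : ℕ) : ℕ := Nat.card {π : Equiv.Perm (Fin n) // ¬ Occ123 π}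

lemma A_zero : A 0 = 1 := by
  have h : ∀ π : Equiv.Perm (Fin 0), ¬ Occ123 π := by
    rintro π ⟨i, j, _, _⟩; exact i.elim0
  exact Nat.card_eq_one_iff_unique.mpr
    ⟨⟨fun a b => Subtype.ext (Subsingleton.elim _ _)⟩, ⟨⟨1, h 1⟩⟩⟩

lemma injective_of_range_eq {m N : ℕ} {w : Fin m → Fin N} {s : Finset (Fin N)}
    (hs : s.card = m) (hr : Set.range w = ↑s) : Function.Injective w := by
  have hv : ∀ k, w k ∈ s := fun k => by
    rw [← Finset.mem_coe, ← hr]; exact Set.mem_range_self k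
  have hsurj : Function.Surjective (fun k => (⟨w k, hv k⟩ : ↥s)) := by
    rintro ⟨x, hx⟩
    obtain ⟨k, hk⟩ : x ∈ Set.range w := by rw [hr]; exact hx
    exact ⟨k, Subtype.ext hk⟩
  have hcard : Fintype.card (Fin m) = Fintype.card ↥s := by
    simp [Fintype.card_coe, hs]
  have hbij := (Fintype.bijective_iff_surjective_and_card
    (fun k => (⟨w k, hv k⟩ : ↥s))).mpr ⟨hsurj, hcard⟩
  intro a b hab
  exact hbij.1 (Subtype.ext hab)

/-- Counting avoiding words with prescribed range. -/
lemma card_words {N : ℕ} (s : Finset (Fin N)) :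
    Nat.card {w : Fin s.card → Fin N // Set.range w = ↑s ∧ ¬ OccW w} = A s.card := by
  have hemb : StrictMono (s.orderEmbOfFin rfl) := (s.orderEmbOfFin rfl).strictMono
  let F : {π : Equiv.Perm (Fin s.card) // ¬ Occ123 π} →
      {w : Fin s.card → Fin N // Set.range w = ↑s ∧ ¬ OccW w} := fun p =>
    ⟨fun k => s.orderEmbOfFin rfl (p.1 k), by
      constructor
      · have : Set.range (fun k => s.orderEmbOfFin rfl (p.1 k)) =
            Set.range (s.orderEmbOfFin rfl) := by
          show Set.range ((s.orderEmbOfFin rfl) ∘ p.1) = _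
          rw [Set.range_comp, Equiv.range_eq_univ, Set.image_univ]
        rw [this, Finset.range_orderEmbOfFin]
      · intro h
        exact p.2 ((occW_comp_strictMono hemb p.1).mp h)⟩
  have hbij : Function.Bijective F := by
    constructor
    · rintro ⟨π, hπ⟩ ⟨π', hπ'⟩ h
      have h' := congrArg Subtype.val h
      refine Subtype.ext (Equiv.ext fun k => ?_)
      exact hemb.injective (congrFun h' k)
    · rintro ⟨w, hr, ho⟩
      have hwinj : Function.Injective w := injective_of_range_eq rfl hr
      have hwmem : ∀ k, w k ∈ s := fun k => by
        rw [← Finset.mem_coe, ← hr]; exact Set.mem_range_self k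
      have h0inj : Function.Injective
          (fun k => (s.orderIsoOfFin rfl).symm ⟨w k, hwmem k⟩) := by
        intro a b hab
        exact hwinj (congrArg Subtype.val ((s.orderIsoOfFin rfl).symm.injective hab))
      have h0bij := Finite.injective_iff_bijective.mp h0inj
      have hco : ∀ k, s.orderEmbOfFin rfl ((Equiv.ofBijective _ h0bij) k) = w k := by
        intro k
        show s.orderEmbOfFin rfl ((s.orderIsoOfFin rfl).symm ⟨w k, hwmem k⟩) = w k
        rw [← Finset.coe_orderIsoOfFin_apply, OrderIso.apply_symm_apply]
      refine ⟨⟨Equiv.ofBijective _ h0bij, fun h => ho ?_⟩, Subtype.ext (funext hco)⟩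
      have : OccW (fun k => s.orderEmbOfFin rfl ((Equiv.ofBijective _ h0bij) k)) :=
        (occW_comp_strictMono hemb _).mpr h
      rwa [funext hco] at this
  exact (Nat.card_congr (Equiv.ofBijective F hbij)).symm


section Construction

variable {n : ℕ}

lemma card_le_n (s : Finset (Fin n)) : s.card ≤ n := by
  have := Finset.card_le_univ s
  simpa using this

lemma compl_bound {s : Finset (Fin n)} {i : Fin (n + 1)} (h : s.card < (i : ℕ)) :
    n - (i : ℕ) < sᶜ.card := by
  have h2 : (i : ℕ) < n + 1 := i.2
  have h3 := card_le_n s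
  rw [Finset.card_compl, Fintype.card_fin]
  omega

/-- The permutation of `Fin (n+1)` built from a prefix word `w` with range `s`,
followed by `0`, followed by the decreasing enumeration of `sᶜ`. -/
def Gfun (s : Finset (Fin n)) (w : Fin s.card → Fin n) (i : Fin (n + 1)) : Fin (n + 1) :=
  if h : (i : ℕ) < s.card then (w ⟨i, h⟩).succ
  else if h2 : (i : ℕ) = s.card then 0
  else (sᶜ.orderEmbOfFin rfl ⟨n - (i : ℕ), compl_bound (by omega)⟩).succ

lemma Gfun_lt {s : Finset (Fin n)} {w : Fin s.card → Fin n} {i : Fin (n + 1)}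
    (h : (i : ℕ) < s.card) : Gfun s w i = (w ⟨i, h⟩).succ := dif_pos h

lemma Gfun_eq {s : Finset (Fin n)} {w : Fin s.card → Fin n} {i : Fin (n + 1)}
    (h : (i : ℕ) = s.card) : Gfun s w i = 0 := by
  rw [Gfun, dif_neg (by omega), dif_pos h]

lemma Gfun_gt {s : Finset (Fin n)} {w : Fin s.card → Fin n} {i : Fin (n + 1)}
    (h : s.card < (i : ℕ)) :
    Gfun s w i = (sᶜ.orderEmbOfFin rfl ⟨n - (i : ℕ), compl_bound h⟩).succ := by
  rw [Gfun, dif_neg (by omega), dif_neg (by omega)]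

lemma Gfun_injective {s : Finset (Fin n)} {w : Fin s.card → Fin n}
    (hr : Set.range w = ↑s) : Function.Injective (Gfun s w) := by
  have hwinj : Function.Injective w := injective_of_range_eq rfl hr
  have hwmem : ∀ k, w k ∈ s := fun k => by
    rw [← Finset.mem_coe, ← hr]; exact Set.mem_range_self k
  intro i i' hG
  rcases lt_trichotomy (i : ℕ) s.card with h | h | h <;>
    rcases lt_trichotomy (i' : ℕ) s.card with h' | h' | h'
  · rw [Gfun_lt h, Gfun_lt h'] at hG
    have h5 := hwinj (Fin.succ_injective _ hG)
    exact Fin.ext (Fin.mk_eq_mk.mp h5)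
  · rw [Gfun_lt h, Gfun_eq h'] at hG
    exact absurd hG (Fin.succ_ne_zero _)
  · rw [Gfun_lt h, Gfun_gt h'] at hG
    have h1 := Fin.succ_injective _ hG
    have hm1 := hwmem ⟨i, h⟩
    rw [h1] at hm1
    exact absurd hm1 (Finset.mem_compl.mp (Finset.orderEmbOfFin_mem sᶜ rfl _))
  · rw [Gfun_eq h, Gfun_lt h'] at hG
    exact absurd hG.symm (Fin.succ_ne_zero _)
  · exact Fin.ext (h.trans h'.symm)
  · rw [Gfun_eq h, Gfun_gt h'] at hG
    exact absurd hG.symm (Fin.succ_ne_zero _)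
  · rw [Gfun_gt h, Gfun_lt h'] at hG
    have h1 := Fin.succ_injective _ hG
    have hm1 := hwmem ⟨i', h'⟩
    rw [← h1] at hm1
    exact absurd hm1 (Finset.mem_compl.mp (Finset.orderEmbOfFin_mem sᶜ rfl _))
  · rw [Gfun_gt h, Gfun_eq h'] at hG
    exact absurd hG (Fin.succ_ne_zero _)
  · rw [Gfun_gt h, Gfun_gt h'] at hG
    have h1 := (sᶜ.orderEmbOfFin rfl).injective (Fin.succ_injective _ hG)
    have h2 := congrArg Fin.val h1
    simp only at h2
    have h3 : (i : ℕ) < n + 1 := i.2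
    have h4 : (i' : ℕ) < n + 1 := i'.2
    exact Fin.ext (by omega)

lemma Gfun_avoid {s : Finset (Fin n)} {w : Fin s.card → Fin n}
    (ho : ¬ OccW w) : ¬ OccW (Gfun s w) := by
  rintro ⟨i, j, hj, hij, h2, h3⟩
  have hijn : (i : ℕ) < (j : ℕ) := hij
  rcases lt_trichotomy (j : ℕ) s.card with h | h | h
  · have hi : (i : ℕ) < s.card := lt_trans hijn h
    rcases eq_or_lt_of_le (Nat.succ_le_of_lt h) with hjm | hjm
    · rw [Gfun_eq (i := ⟨(j : ℕ) + 1, hj⟩) hjm] at h3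
      exact absurd h3 (Fin.not_lt_zero _)
    · rw [Gfun_lt hi, Gfun_lt h] at h2
      rw [Gfun_lt h, Gfun_lt (i := ⟨(j : ℕ) + 1, hj⟩) hjm] at h3
      exact ho ⟨⟨i, hi⟩, ⟨j, h⟩, hjm, hijn, Fin.succ_lt_succ_iff.mp h2,
        Fin.succ_lt_succ_iff.mp h3⟩
  · rw [Gfun_eq h] at h2
    exact absurd h2 (Fin.not_lt_zero _)
  · have hj1 : s.card < (j : ℕ) + 1 := by omega
    rw [Gfun_gt h, Gfun_gt (i := ⟨(j : ℕ) + 1, hj⟩) hj1] at h3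
    have h4 := (sᶜ.orderEmbOfFin rfl).strictMono.lt_iff_lt.mp (Fin.succ_lt_succ_iff.mp h3)
    have h5 : n - (j : ℕ) < n - ((j : ℕ) + 1) := h4
    omega

lemma mem_iff_G {s : Finset (Fin n)} {w : Fin s.card → Fin n}
    (hr : Set.range w = ↑s) (v : Fin n) :
    v ∈ s ↔ ∃ i : Fin (n + 1), ∃ h : (i : ℕ) < s.card, Gfun s w i = v.succ := by
  constructor
  · intro hv
    obtain ⟨k, hk⟩ : v ∈ Set.range w := by rw [hr]; exact hv
    have hk2 : (k : ℕ) < s.card := k.2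
    have hkn : (k : ℕ) < n + 1 := by have := card_le_n s; omega
    refine ⟨⟨(k : ℕ), hkn⟩, hk2, ?_⟩
    rw [Gfun_lt hk2]
    have : (⟨(k : ℕ), hk2⟩ : Fin s.card) = k := Fin.ext rfl
    rw [this, hk]
  · rintro ⟨i, h, hGi⟩
    rw [Gfun_lt h] at hGi
    have h1 := Fin.succ_injective _ hGi
    rw [← h1]
    have : w ⟨i, h⟩ ∈ Set.range w := Set.mem_range_self _
    rw [hr] at this
    exact this

/-- The combining map. -/
noncomputable def gmap (n : ℕ)
    (x : Σ s : Finset (Fin n), {w : Fin s.card → Fin n // Set.range w = ↑s ∧ ¬ OccW w}) :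
    {π : Equiv.Perm (Fin (n + 1)) // ¬ Occ123 π} :=
  ⟨Equiv.ofBijective (Gfun x.1 x.2.1)
      (Finite.injective_iff_bijective.mp (Gfun_injective x.2.2.1)),
    fun h => Gfun_avoid x.2.2.2 h⟩

lemma gmap_injective (n : ℕ) : Function.Injective (gmap n) := by
  rintro ⟨s, w, hw⟩ ⟨s', w', hw'⟩ h
  have h1 := Subtype.ext_iff.mp h
  have hG : Gfun s w = Gfun s' w' := funext fun i => by
    exact DFunLike.congr_fun h1 i
  have hm : s.card = s'.card := by
    by_contra hne
    rcases Nat.lt_or_ge s.card s'.card with hlt | hge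
    · have hb : s.card < n + 1 := by have := card_le_n s'; omega
      have h0 : Gfun s w ⟨s.card, hb⟩ = 0 := Gfun_eq rfl
      rw [hG, Gfun_lt hlt] at h0
      exact Fin.succ_ne_zero _ h0
    · have hlt : s'.card < s.card := by omega
      have hb : s'.card < n + 1 := by have := card_le_n s; omega
      have h0 : Gfun s' w' ⟨s'.card, hb⟩ = 0 := Gfun_eq rfl
      rw [← hG, Gfun_lt hlt] at h0
      exact Fin.succ_ne_zero _ h0
  have hs : s = s' := by
    ext v
    rw [mem_iff_G hw.1 v, mem_iff_G hw'.1 v]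
    constructor
    · rintro ⟨i, hi, hGi⟩
      exact ⟨i, by omega, by rw [← hG]; exact hGi⟩
    · rintro ⟨i, hi, hGi⟩
      exact ⟨i, by omega, by rw [hG]; exact hGi⟩
  subst hs
  have hwfn : w = w' := funext fun k => by
    have hkn : (k : ℕ) < n + 1 := by have := card_le_n s; have := k.2; omega
    have := congrFun hG ⟨(k : ℕ), hkn⟩
    rw [Gfun_lt k.2, Gfun_lt k.2] at this
    have h2 := Fin.succ_injective _ this
    have h3 : (⟨(k : ℕ), k.2⟩ : Fin s.card) = k := Fin.ext rfl
    rwa [h3] at h2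
  exact congrArg (fun z => (⟨s, z⟩ : Σ s : Finset (Fin n),
    {w : Fin s.card → Fin n // Set.range w = ↑s ∧ ¬ OccW w})) (Subtype.ext hwfn)

lemma gmap_surjective (n : ℕ) : Function.Surjective (gmap n) := by
  classical
  rintro ⟨π, hπ⟩
  set p := π.symm 0 with hp
  have hpn : (p : ℕ) < n + 1 := p.2
  set s : Finset (Fin n) := Finset.univ.filter (fun v => π.symm v.succ < p) with hsdef
  have hne : ∀ i : Fin (n + 1), i ≠ p → π i ≠ 0 := by
    intro i hip h0
    exact hip (by rw [hp, ← h0, Equiv.symm_apply_apply])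
  have hcard : s.card = (p : ℕ) := by
    rw [← Fin.card_Iio (b := p)]
    apply Finset.card_bij (fun v _ => π.symm v.succ)
    · intro a ha
      rw [Finset.mem_Iio]
      exact (Finset.mem_filter.mp ha).2
    · intro a ha b hb hab
      exact Fin.succ_injective _ (π.symm.injective hab)
    · intro b hb
      have hblt : b < p := Finset.mem_Iio.mp hb
      have hbne : b ≠ p := ne_of_lt hblt
      have hb0 : π b ≠ 0 := hne b hbne
      refine ⟨(π b).pred hb0, ?_, ?_⟩
      · rw [hsdef, Finset.mem_filter]
        refine ⟨Finset.mem_univ _, ?_⟩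
        rw [Fin.succ_pred, Equiv.symm_apply_apply]
        exact hblt
      · rw [Fin.succ_pred, Equiv.symm_apply_apply]
  have hple : (p : ℕ) ≤ n := by omega
  have hk1 : ∀ k : Fin s.card, (k : ℕ) < n + 1 := fun k => by
    have := k.2; omega
  have hk2 : ∀ k : Fin s.card, (⟨(k : ℕ), hk1 k⟩ : Fin (n + 1)) ≠ p := fun k => by
    intro h
    have h2 := congrArg Fin.val h
    have := k.2
    simp only at h2
    omega
  set wfun : Fin s.card → Fin n :=
    fun k => (π ⟨(k : ℕ), hk1 k⟩).pred (hne _ (hk2 k)) with hwdef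
  have hwsucc : ∀ k : Fin s.card, (wfun k).succ = π ⟨(k : ℕ), hk1 k⟩ := fun k =>
    Fin.succ_pred _ _
  have hrange : Set.range wfun = ↑s := by
    ext v
    simp only [Set.mem_range, Finset.mem_coe, hsdef, Finset.mem_filter,
      Finset.mem_univ, true_and]
    constructor
    · rintro ⟨k, rfl⟩
      rw [hwsucc k, Equiv.symm_apply_apply]
      show ((⟨(k : ℕ), hk1 k⟩ : Fin (n + 1)) : ℕ) < (p : ℕ)
      have := k.2
      simp only
      omega
    · intro hv
      have hvlt : ((π.symm v.succ : Fin (n + 1)) : ℕ) < s.card := by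
        rw [hcard]; exact hv
      refine ⟨⟨((π.symm v.succ : Fin (n + 1)) : ℕ), hvlt⟩, ?_⟩
      apply Fin.succ_injective
      rw [hwsucc]
      simp only [Fin.eta]
      exact Equiv.apply_symm_apply _ _
  have havoid : ¬ OccW wfun := by
    rintro ⟨i, j, hj, hij, h2, h3⟩
    apply hπ
    have hijn : (i : ℕ) < (j : ℕ) := hij
    have hjn : (j : ℕ) + 1 < n + 1 := by
      have := hj; have := card_le_n s; omega
    refine ⟨⟨(i : ℕ), hk1 i⟩, ⟨(j : ℕ), hk1 j⟩, hjn, hijn, ?_, ?_⟩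
    · rw [← Fin.succ_lt_succ_iff, hwsucc, hwsucc] at h2
      exact h2
    · rw [← Fin.succ_lt_succ_iff, hwsucc, hwsucc] at h3
      exact h3
  -- decreasing suffix
  have hdec : ∀ (j : ℕ) (hj1 : (p : ℕ) < j) (hj2 : j + 1 < n + 1),
      π ⟨j + 1, hj2⟩ < π ⟨j, by omega⟩ := by
    intro j hj1 hj2
    rcases lt_trichotomy (π ⟨j + 1, hj2⟩) (π ⟨j, by omega⟩) with h | h | h
    · exact h
    · exfalso
      have := π.injective h
      have h2 := congrArg Fin.val this
      simp only at h2
      omega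
    · exfalso
      apply hπ
      refine ⟨p, ⟨j, by omega⟩, hj2, ?_, ?_, h⟩
      · show (p : ℕ) < j
        exact hj1
      · have hπp : π p = 0 := by rw [hp, Equiv.apply_symm_apply]
        rw [hπp]
        have : π ⟨j, by omega⟩ ≠ 0 := hne _ (by
          intro hh; have := congrArg Fin.val hh; simp only at this; omega)
        exact (Fin.pos_iff_ne_zero' _).mpr this
  have hchain : ∀ (a d : ℕ) (hpa : (p : ℕ) < a) (hb : a + d + 1 < n + 1),
      π ⟨a + d + 1, hb⟩ < π ⟨a, by omega⟩ := by
    intro a d hpa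
    induction d with
    | zero => intro hb; exact hdec a hpa hb
    | succ d ih =>
      intro hb
      have h2 := hdec (a + d + 1) (by omega) (by omega)
      have h3 := ih (by omega)
      exact lt_trans h2 h3
  -- the decreasing enumeration of the complement
  have hcc : sᶜ.card = n - (p : ℕ) := by
    rw [Finset.card_compl, Fintype.card_fin, hcard]
  have hfb : ∀ t : Fin sᶜ.card, n - (t : ℕ) < n + 1 := fun t => by omega
  have hfgt : ∀ t : Fin sᶜ.card, (p : ℕ) < n - (t : ℕ) := fun t => by
    have := t.2; omega
  have hfne : ∀ t : Fin sᶜ.card, (⟨n - (t : ℕ), hfb t⟩ : Fin (n + 1)) ≠ p := fun t => by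
    intro h
    have h2 := congrArg Fin.val h
    have := hfgt t
    simp only at h2
    omega
  set f : Fin sᶜ.card → Fin n :=
    fun t => (π ⟨n - (t : ℕ), hfb t⟩).pred (hne _ (hfne t)) with hfdef
  have hfsucc : ∀ t, (f t).succ = π ⟨n - (t : ℕ), hfb t⟩ := fun t => Fin.succ_pred _ _
  have hmono : StrictMono f := by
    intro a b hab
    have habn : (a : ℕ) < (b : ℕ) := hab
    have hbn : (b : ℕ) < n - (p : ℕ) := by have := b.2; omega
    rw [← Fin.succ_lt_succ_iff, hfsucc, hfsucc]
    have hkey := hchain (n - (b : ℕ)) ((n - (a : ℕ)) - (n - (b : ℕ)) - 1) (hfgt b)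
      (by omega)
    have heq : (⟨n - (a : ℕ), hfb a⟩ : Fin (n + 1)) =
        ⟨(n - (b : ℕ)) + ((n - (a : ℕ)) - (n - (b : ℕ)) - 1) + 1, by omega⟩ :=
      Fin.mk_eq_mk.mpr (by omega)
    rw [heq]
    exact hkey
  have hfmem : ∀ t, f t ∈ sᶜ := fun t => by
    rw [Finset.mem_compl, hsdef, Finset.mem_filter]
    rintro ⟨-, hlt⟩
    rw [show (f t).succ = π ⟨n - (t : ℕ), hfb t⟩ from hfsucc t] at hlt
    rw [Equiv.symm_apply_apply] at hlt
    have h2 : (n - (t : ℕ)) < (p : ℕ) := hlt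
    have := hfgt t
    omega
  have hfeq : f = ⇑(sᶜ.orderEmbOfFin rfl) := Finset.orderEmbOfFin_unique rfl hfmem hmono
  refine ⟨⟨s, ⟨wfun, hrange, havoid⟩⟩, ?_⟩
  apply Subtype.ext
  apply Equiv.coe_fn_injective
  funext i
  show Gfun s wfun i = π i
  rcases lt_trichotomy ((i : ℕ)) s.card with h | h | h
  · rw [Gfun_lt h, hwsucc]
  · rw [Gfun_eq h]
    have hip : i = p := Fin.ext (by rw [h, hcard])
    rw [hip, hp, Equiv.apply_symm_apply]
  · rw [Gfun_gt h, ← hfeq, hfsucc]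
    refine congrArg π (Fin.ext ?_)
    have h2 : (i : ℕ) < n + 1 := i.2
    simp only
    omega

end Construction

lemma A_succ (n : ℕ) : A (n + 1) = ∑ k ∈ Finset.range (n + 1), Nat.choose n k * A k := by
  classical
  have hbij : Function.Bijective (gmap n) := ⟨gmap_injective n, gmap_surjective n⟩
  have hcu : (Finset.univ : Finset (Fin n)).card = n := by
    rw [Finset.card_univ, Fintype.card_fin]
  have h1 : A (n + 1) = ∑ s : Finset (Fin n), A s.card := by
    rw [A, ← Nat.card_congr (Equiv.ofBijective (gmap n) hbij),
      Nat.card_eq_fintype_card, Fintype.card_sigma]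
    exact Finset.sum_congr rfl fun s _ => by
      rw [← Nat.card_eq_fintype_card]; exact card_words s
  rw [h1, ← Finset.powerset_univ, Finset.powerset_card_disjiUnion]
  erw [Finset.sum_disjiUnion]
  rw [hcu]
  refine Finset.sum_congr rfl fun k hk => ?_
  have h2 : ∑ s ∈ Finset.powersetCard k (Finset.univ : Finset (Fin n)), A s.card =
      ∑ s ∈ Finset.powersetCard k (Finset.univ : Finset (Fin n)), A k :=
    Finset.sum_congr rfl fun s hs => by rw [(Finset.mem_powersetCard.mp hs).2]
  rw [h2, Finset.sum_const, Finset.card_powersetCard, Finset.card_univ, Fintype.card_fin,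
    smul_eq_mul]

theorem count_avoiding_1_23_eq_bell (n : ℕ) :
    Nat.card {π : Equiv.Perm (Fin n) // ¬ Occ123 π} = bell n := by
  show A n = bell n
  induction n using Nat.strong_induction_on with
  | _ n ih =>
    match n with
    | 0 => rw [A_zero, bell]
    | n + 1 =>
      rw [A_succ, bell,
        Finset.sum_attach (Finset.range (n+1)) (fun k => Nat.choose n k * bell k)]
      exact Finset.sum_congr rfl fun k hk => by
        rw [ih k (Finset.mem_range.mp hk)]
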